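/- Let V be an orthogonal family of nonzero vectors in C^{N+1} and S the 3-tensor S(x) = ∑_{v ∈ V} (1/‖v‖²) ⟨v, x⟩ v ⊗ v. Then V coincides exactly with the set {w ∈ C^{N+1} \ {0} : S(w) = w ⊗ w}. -/

import Mathlib

open scoped BigOperators InnerProductSpace ComplexConjugate

/-- **Recovering the orthogonal family from the 3-tensor.**
If `V = {v 1, …, v K}` is an orthogonal family of nonzero vectors in `ℂ^{N+1}` and
`S(x) = ∑_{v ∈ V} (1/‖v‖²) ⟪v, x⟫ v ⊗ v`, then `V` is exactly the set of nonzero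
vectors `w` with `S(w) = w ⊗ w`. -/
theorem orthogonal_family_eq_fixed_vectors (N K : ℕ)
    (v : Fin K → EuclideanSpace ℂ (Fin (N + 1)))
    (horth : ∀ m n, m ≠ n → ⟪v m, v n⟫_ℂ = 0)
    (hne : ∀ m, v m ≠ 0) :
    Set.range v
      = {w : EuclideanSpace ℂ (Fin (N + 1)) | w ≠ 0 ∧
          ∀ i j, ∑ m, (1 / (‖v m‖ ^ 2 : ℂ)) * ⟪v m, w⟫_ℂ * (v m i * v m j)
            = w i * w j} := by
  have hinner : ∀ x y : EuclideanSpace ℂ (Fin (N + 1)),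
      ⟪x, y⟫_ℂ = ∑ i, conj (x i) * y i := by
    intro x y; simp [PiLp.inner_apply, RCLike.inner_apply]
    exact Finset.sum_congr rfl fun i _ => mul_comm _ _
  have hself : ∀ m, ⟪v m, v m⟫_ℂ = (‖v m‖ : ℂ) ^ 2 := fun m => by
    exact_mod_cast inner_self_eq_norm_sq_to_K (v m)
  have hnorm : ∀ m, (‖v m‖ : ℂ) ^ 2 ≠ 0 := fun m => by
    simpa using pow_ne_zero 2 (Complex.ofReal_ne_zero.2 (norm_ne_zero_iff.2 (hne m)))
  ext w
  simp only [Set.mem_range, Set.mem_setOf_eq]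
  constructor
  · rintro ⟨n, rfl⟩
    refine ⟨hne n, fun i j => ?_⟩
    rw [Finset.sum_eq_single n]
    · rw [hself n]
      have h0 : (‖v n‖ : ℂ) ≠ 0 := fun h0 => hnorm n (by rw [h0]; ring)
      field_simp [hnorm n, h0]
    · intro m _ hm
      rw [horth m n hm]
      ring
    · simp
  · rintro ⟨hw, h⟩
    have key : ∀ n, ∀ j, ⟪v n, w⟫_ℂ * w j = ⟪v n, w⟫_ℂ * v n j := by
      intro n j
      calc ⟪v n, w⟫_ℂ * w j = ∑ i, conj (v n i) * (w i * w j) := by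
            rw [hinner, Finset.sum_mul]; simp [mul_assoc]
        _ = ∑ i, conj (v n i) *
            ∑ m, (1 / (‖v m‖ ^ 2 : ℂ)) * ⟪v m, w⟫_ℂ * (v m i * v m j) := by
            refine Finset.sum_congr rfl fun i _ => ?_
            rw [h i j]
        _ = ∑ m, (1 / (‖v m‖ ^ 2 : ℂ)) * ⟪v m, w⟫_ℂ * (⟪v n, v m⟫_ℂ * v m j) := by
            simp only [Finset.mul_sum]
            rw [Finset.sum_comm]
            refine Finset.sum_congr rfl fun m _ => ?_
            rw [hinner (v n) (v m), Finset.sum_mul, Finset.mul_sum]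
            refine Finset.sum_congr rfl fun i _ => ?_
            ring
        _ = ⟪v n, w⟫_ℂ * v n j := by
            rw [Finset.sum_eq_single n]
            · rw [hself n]
              have h0 : (‖v n‖ : ℂ) ≠ 0 := fun h0 => hnorm n (by rw [h0]; ring)
              field_simp [hnorm n, h0]
            · intro m _ hm
              rw [horth n m (Ne.symm hm)]
              ring
            · simp
    by_cases hex : ∃ n, ⟪v n, w⟫_ℂ ≠ 0
    · obtain ⟨n, hn⟩ := hex
      refine ⟨n, ?_⟩
      ext j
      exact (mul_left_cancel₀ hn (key n j)).symm
    · push_neg at hex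
      exfalso
      apply hw
      ext i
      have h0 := h i i
      rw [Finset.sum_eq_zero (fun m _ => by rw [hex m]; ring)] at h0
      have : w i = 0 := mul_self_eq_zero.mp h0.symm
      simpa using this
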